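/- Let n ≥ q ≥ 4, let μ_1, ..., μ_n ≥ 0 and let d_1 ≥ ... ≥ d_n with ∑ d_i = 2(n−1), d_i > 1 for i ≤ q and d_i = 1 for i > q. Then the ROCP objective f(X) = (1/2) ∑_{i,j=1}^n ∑_{k,l=1}^q μ_i x_{ik} μ_j x_{jl} |k−l| is a concave function of X on the affine set of real n × q matrices satisfying ∑_{k=1}^q x_{ik} = 1 for every i = 1, ..., n; that is, for all such matrices X, Y and all t ∈ [0,1], f(tX + (1−t)Y) ≥ t f(X) + (1−t) f(Y). -/
import Mathlib


open Matrix Finset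

/-- The ROCP objective `f(X) = (1/2) ∑_{i,j} ∑_{k,l} μ_i x_{ik} μ_j x_{jl} |k - l|`. -/
noncomputable def fROCP {n q : ℕ} (μ : Fin n → ℝ) (X : Matrix (Fin n) (Fin q) ℝ) : ℝ :=
  (1 / 2) * ∑ i, ∑ j, ∑ k, ∑ l,
    μ i * X i k * (μ j * X j l) * |((k : ℕ) : ℝ) - ((l : ℕ) : ℝ)|

/-- The feasible set of the relaxed optimal caterpillar problem (ROCP): box constraints,
unique assignment of each vertex, one internal vertex per backbone position, and balance
of vertex degrees (positions `k = 1, ..., q` are represented by `Fin q`, vertex indices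
`i = 1, ..., n` by `Fin n`, internal indices being those with `(i : ℕ) < q`). -/
def ROCPFeasible (n q : ℕ) (d : Fin n → ℕ) (X : Matrix (Fin n) (Fin q) ℝ) : Prop :=
  (∀ i k, 0 ≤ X i k ∧ X i k ≤ 1) ∧
  (∀ i, ∑ k, X i k = 1) ∧
  (∀ k, (∑ i : Fin n, if (i : ℕ) < q then X i k else 0) = 1) ∧
  (∀ k : Fin q, (k : ℕ) ≠ 0 → (k : ℕ) ≠ q - 1 → ∑ i, ((d i : ℝ) - 2) * X i k = 0) ∧
  (∀ k : Fin q, ((k : ℕ) = 0 ∨ (k : ℕ) = q - 1) → ∑ i, ((d i : ℝ) - 2) * X i k = -1)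

/-- A matrix is a symmetric solution if `x_{ik} = x_{i, q-k+1}` for all `i`, `k`. -/
def SymmetricSol {n q : ℕ} (X : Matrix (Fin n) (Fin q) ℝ) : Prop :=
  ∀ i k, X i k = X i k.rev

/-! ### Auxiliary lemmas -/

/-- The 0/1 step indicator `e m k = 1` iff `k ≤ m`. -/
private noncomputable def eInd {q : ℕ} (m k : Fin q) : ℝ := if (k:ℕ) ≤ (m:ℕ) then 1 else 0

private lemma sum_eInd {q : ℕ} (k : Fin q) : ∑ m : Fin q, eInd m k = (q:ℝ) - (k:ℕ) := by
  unfold eInd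
  rw [Fin.sum_univ_eq_sum_range (fun m => if (k:ℕ) ≤ m then (1:ℝ) else 0) q]
  rw [← Finset.sum_filter]
  have : (Finset.range q).filter (fun m => (k:ℕ) ≤ m) = Finset.Ico (k:ℕ) q := by
    ext m; simp [Finset.mem_Ico, and_comm]
  rw [this]; simp [Nat.cast_sub k.2.le]

private lemma sum_eInd_mul {q : ℕ} (k l : Fin q) :
    ∑ m : Fin q, eInd m k * eInd m l = (q:ℝ) - max (k:ℕ) (l:ℕ) := by
  have h : ∀ m : Fin q, eInd m k * eInd m l = if max (k:ℕ) (l:ℕ) ≤ (m:ℕ) then (1:ℝ) else 0 := by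
    intro m; unfold eInd; simp [max_le_iff]; split_ifs with h1 h2 h3 <;> simp_all
  simp_rw [h]
  rw [Fin.sum_univ_eq_sum_range (fun m => if max (k:ℕ) (l:ℕ) ≤ m then (1:ℝ) else 0) q]
  rw [← Finset.sum_filter]
  have : (Finset.range q).filter (fun m => max (k:ℕ) (l:ℕ) ≤ m) = Finset.Ico (max (k:ℕ) (l:ℕ)) q := by
    ext m; simp [Finset.mem_Ico, and_comm]
  rw [this]
  have hm : max (k:ℕ) (l:ℕ) ≤ q := max_le k.2.le l.2.le
  simp [Nat.cast_sub hm]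

private lemma abs_eq_sum_sq {q : ℕ} (k l : Fin q) :
    |((k:ℕ):ℝ) - ((l:ℕ):ℝ)| = ∑ m : Fin q, (eInd m k - eInd m l)^2 := by
  have expand : ∀ m : Fin q, (eInd m k - eInd m l)^2
      = eInd m k + eInd m l - 2 * (eInd m k * eInd m l) := by
    intro m; unfold eInd; split_ifs <;> ring
  simp_rw [expand]
  rw [Finset.sum_sub_distrib, Finset.sum_add_distrib, ← Finset.mul_sum,
      sum_eInd, sum_eInd, sum_eInd_mul]
  rcases le_total (k:ℕ) (l:ℕ) with h | h
  · rw [max_eq_right h, abs_of_nonpos (sub_nonpos.mpr ((Nat.cast_le (α:=ℝ)).mpr h))]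
    ring
  · rw [max_eq_left h, abs_of_nonneg (sub_nonneg.mpr ((Nat.cast_le (α:=ℝ)).mpr h))]
    ring

private lemma quad_neg {q : ℕ} (w e : Fin q → ℝ) (hw : ∑ k, w k = 0) :
    ∑ k, ∑ l, w k * w l * (e k - e l)^2 = -2 * (∑ k, w k * e k)^2 := by
  have h : ∀ k : Fin q, ∑ l, w k * w l * (e k - e l)^2
      = (w k * (e k)^2) * (∑ l, w l) - (w k * e k) * (2 * (∑ l, w l * e l))
        + w k * (∑ l, w l * e l ^ 2) := by
    intro k
    simp only [Finset.mul_sum]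
    rw [← Finset.sum_sub_distrib, ← Finset.sum_add_distrib]
    exact Finset.sum_congr rfl fun l _ => by ring
  simp_rw [h, hw, mul_zero, zero_sub, neg_add_eq_sub, Finset.sum_sub_distrib,
    ← Finset.sum_mul, hw, zero_mul]
  ring

private lemma sum_swap3 {α β γ : Type*} [Fintype α] [Fintype β] [Fintype γ]
    (F : α → β → γ → ℝ) :
    ∑ k, ∑ l, ∑ m, F k l m = ∑ m, ∑ k, ∑ l, F k l m :=
  calc ∑ k, ∑ l, ∑ m, F k l m
      = ∑ k, ∑ m, ∑ l, F k l m := Finset.sum_congr rfl fun _ _ => Finset.sum_comm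
    _ = ∑ m, ∑ k, ∑ l, F k l m := Finset.sum_comm

private lemma sum_swap4 {α β γ δ : Type*} [Fintype α] [Fintype β] [Fintype γ] [Fintype δ]
    (F : α → β → γ → δ → ℝ) :
    ∑ i, ∑ j, ∑ k, ∑ l, F i j k l = ∑ k, ∑ l, ∑ i, ∑ j, F i j k l :=
  calc ∑ i, ∑ j, ∑ k, ∑ l, F i j k l
      = ∑ i, ∑ k, ∑ j, ∑ l, F i j k l :=
        Finset.sum_congr rfl fun _ _ => Finset.sum_comm
    _ = ∑ k, ∑ i, ∑ j, ∑ l, F i j k l := Finset.sum_comm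
    _ = ∑ k, ∑ i, ∑ l, ∑ j, F i j k l :=
        Finset.sum_congr rfl fun _ _ => Finset.sum_congr rfl fun _ _ => Finset.sum_comm
    _ = ∑ k, ∑ l, ∑ i, ∑ j, F i j k l :=
        Finset.sum_congr rfl fun _ _ => Finset.sum_comm

private lemma fROCP_eq {n q : ℕ} (μ : Fin n → ℝ) (Z : Matrix (Fin n) (Fin q) ℝ) :
    fROCP μ Z = (1 / 2) * ∑ k, ∑ l, (∑ i, μ i * Z i k) * (∑ j, μ j * Z j l)
        * |((k : ℕ) : ℝ) - ((l : ℕ) : ℝ)| := by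
  unfold fROCP
  congr 1
  rw [sum_swap4]
  refine Finset.sum_congr rfl fun k _ => Finset.sum_congr rfl fun l _ => ?_
  simp only [Finset.sum_mul, Finset.mul_sum]
  rw [Finset.sum_comm]

private lemma key_nonpos {q : ℕ} (w : Fin q → ℝ) (hw : ∑ k, w k = 0) :
    ∑ k, ∑ l, w k * w l * |((k:ℕ):ℝ) - ((l:ℕ):ℝ)| ≤ 0 := by
  have h1 : ∀ k l : Fin q, w k * w l * |((k:ℕ):ℝ) - ((l:ℕ):ℝ)|
      = ∑ m : Fin q, w k * w l * (eInd m k - eInd m l)^2 := by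
    intro k l; rw [abs_eq_sum_sq, Finset.mul_sum]
  simp_rw [h1]
  rw [sum_swap3]
  apply Finset.sum_nonpos
  intro m _
  rw [quad_neg w (fun k => eInd m k) hw]
  nlinarith [sq_nonneg (∑ k, w k * eInd m k)]

theorem fROCP_concave_on_row_sum_one (n q : ℕ) (hnq : q ≤ n) (hq : 4 ≤ q)
    (d : Fin n → ℕ) (μ : Fin n → ℝ)
    (hμ : ∀ i, 0 ≤ μ i)
    (hd_anti : ∀ i j : Fin n, i ≤ j → d j ≤ d i)
    (hd_sum : ∑ i, d i = 2 * (n - 1))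
    (hd_int : ∀ i : Fin n, (i : ℕ) < q → 1 < d i)
    (hd_pend : ∀ i : Fin n, q ≤ (i : ℕ) → d i = 1)
    (X Y : Matrix (Fin n) (Fin q) ℝ)
    (hX : ∀ i, ∑ k, X i k = 1) (hY : ∀ i, ∑ k, Y i k = 1)
    (t : ℝ) (ht0 : 0 ≤ t) (ht1 : t ≤ 1) :
    t * fROCP μ X + (1 - t) * fROCP μ Y ≤ fROCP μ (t • X + (1 - t) • Y) := by
  set u : Fin q → ℝ := fun k => ∑ i, μ i * X i k with hu
  set v : Fin q → ℝ := fun k => ∑ i, μ i * Y i k with hv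
  -- row sums of u and v
  have hsum : ∀ (Z : Matrix (Fin n) (Fin q) ℝ), (∀ i, ∑ k, Z i k = 1) →
      ∑ k, ∑ i, μ i * Z i k = ∑ i, μ i := by
    intro Z hZ
    rw [Finset.sum_comm]
    refine Finset.sum_congr rfl fun i _ => ?_
    rw [← Finset.mul_sum, hZ i, mul_one]
  have hw : ∑ k, (u k - v k) = 0 := by
    rw [Finset.sum_sub_distrib]
    simp only [hu, hv]
    rw [hsum X hX, hsum Y hY, sub_self]
  have hQ := key_nonpos (fun k => u k - v k) hw
  -- rewrite the three fROCP values
  have hZcoord : ∀ k : Fin q, (∑ i, μ i * (t • X + (1 - t) • Y) i k)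
      = t * u k + (1 - t) * v k := by
    intro k
    simp only [hu, hv, Finset.mul_sum]
    rw [← Finset.sum_add_distrib]
    refine Finset.sum_congr rfl fun i _ => ?_
    simp [Matrix.add_apply, Matrix.smul_apply, smul_eq_mul]
    ring
  have hfZ : fROCP μ (t • X + (1 - t) • Y)
      = (1 / 2) * ∑ k, ∑ l, (t * u k + (1 - t) * v k) * (t * u l + (1 - t) * v l)
        * |((k : ℕ) : ℝ) - ((l : ℕ) : ℝ)| := by
    rw [fROCP_eq]
    congr 1
    refine Finset.sum_congr rfl fun k _ => Finset.sum_congr rfl fun l _ => ?_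
    rw [hZcoord k, hZcoord l]
  have hident : ∑ k, ∑ l, (t * u k + (1 - t) * v k) * (t * u l + (1 - t) * v l)
        * |((k : ℕ) : ℝ) - ((l : ℕ) : ℝ)|
      = t * (∑ k, ∑ l, u k * u l * |((k : ℕ) : ℝ) - ((l : ℕ) : ℝ)|)
        + (1 - t) * (∑ k, ∑ l, v k * v l * |((k : ℕ) : ℝ) - ((l : ℕ) : ℝ)|)
        - t * (1 - t) * (∑ k, ∑ l, (u k - v k) * (u l - v l)
            * |((k : ℕ) : ℝ) - ((l : ℕ) : ℝ)|) := by
    simp only [Finset.mul_sum]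
    rw [← Finset.sum_add_distrib, ← Finset.sum_sub_distrib]
    refine Finset.sum_congr rfl fun k _ => ?_
    rw [← Finset.sum_add_distrib, ← Finset.sum_sub_distrib]
    exact Finset.sum_congr rfl fun l _ => by ring
  rw [fROCP_eq μ X, fROCP_eq μ Y, hfZ, hident]
  have hts : 0 ≤ t * (1 - t) := mul_nonneg ht0 (by linarith)
  nlinarith [mul_nonneg hts (neg_nonneg.mpr hQ)]
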